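/- For every m ≥ 1 and c ≥ 1, the treewidth of the hardware graph F(m,c) is at least cm: cm ≤ τ(F(m,c)). -/

import Mathlib

open SimpleGraph

/-- A tree decomposition of `G` with tree `T` and bags `B`. -/
def IsTreeDecomp {V I : Type} (G : SimpleGraph V) (T : SimpleGraph I)
    (B : I → Finset V) : Prop :=
  T.IsTree ∧
  (∀ v : V, ∃ i : I, v ∈ B i) ∧
  (∀ u v : V, G.Adj u v → ∃ i : I, u ∈ B i ∧ v ∈ B i) ∧
  (∀ v : V, (T.induce {i : I | v ∈ B i}).Connected)

/-- The treewidth of `G`: the least `k` such that `G` has a tree decomposition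
all of whose bags have at most `k + 1` vertices (i.e. width at most `k`). -/
noncomputable def treewidth {V : Type} (G : SimpleGraph V) : ℕ :=
  sInf {k : ℕ | ∃ (I : Type) (T : SimpleGraph I) (B : I → Finset V),
    IsTreeDecomp G T B ∧ ∀ i : I, (B i).card ≤ k + 1}

/-- `H` is a minor of `G`: branch sets are nonempty (connectedness includes
nonemptiness), induce connected subgraphs, are pairwise disjoint, and every
edge of `H` is realized by an edge of `G` between the corresponding branch sets. -/
def IsMinor {V W : Type} (H : SimpleGraph V) (G : SimpleGraph W) : Prop :=
  ∃ φ : V → Set W,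
    (∀ v : V, (G.induce (φ v)).Connected) ∧
    (∀ u v : V, u ≠ v → Disjoint (φ u) (φ v)) ∧
    (∀ u v : V, H.Adj u v → ∃ a ∈ φ u, ∃ b ∈ φ v, G.Adj a b)

/-- The `n × m` two-dimensional grid graph: vertices `(i, j)` are adjacent iff
they differ by exactly 1 in one coordinate and agree in the other. -/
def gridGraph (n m : ℕ) : SimpleGraph (Fin n × Fin m) :=
  SimpleGraph.fromRel (fun p q =>
    (p.1 = q.1 ∧ p.2.val + 1 = q.2.val) ∨ (p.2 = q.2 ∧ p.1.val + 1 = q.1.val))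

/-- The hardware graph `F(m, c)`: an `m × m` grid of `K_{c,c}` unit cells.
A vertex `(a, b, d)` lies in cell `(a, b)`; it is on the left half if `d < c`
and the right half otherwise.  Left and right halves of a cell are completely
joined; left-half vertices are joined to their images in the cell directly
below; right-half vertices are joined to their images in the cell to the right. -/
def hardwareGraph (m c : ℕ) : SimpleGraph (Fin m × Fin m × Fin (2 * c)) :=
  SimpleGraph.fromRel (fun x y =>
    (x.1 = y.1 ∧ x.2.1 = y.2.1 ∧ x.2.2.val < c ∧ c ≤ y.2.2.val) ∨
    (x.2.1 = y.2.1 ∧ x.2.2 = y.2.2 ∧ x.2.2.val < c ∧ x.1.val + 1 = y.1.val) ∨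
    (x.1 = y.1 ∧ x.2.2 = y.2.2 ∧ c ≤ x.2.2.val ∧ x.2.1.val + 1 = y.2.1.val))


/-- `S` is nonempty and any two of its vertices are joined by a walk staying in `S`. -/
def SConn {V : Type} (G : SimpleGraph V) (S : Set V) : Prop :=
  S.Nonempty ∧ ∀ x ∈ S, ∀ y ∈ S, ∃ w : G.Walk x y, ∀ z ∈ w.support, z ∈ S

lemma sconn_of_induce_connected {V : Type} (G : SimpleGraph V) (S : Set V)
    (h : (G.induce S).Connected) : SConn G S := by
  constructor
  · obtain ⟨⟨x, hx⟩⟩ := h.nonempty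
    exact ⟨x, hx⟩
  · intro x hx y hy
    obtain ⟨w⟩ := h.preconnected ⟨x, hx⟩ ⟨y, hy⟩
    refine ⟨w.map (Embedding.induce S).toHom, ?_⟩
    intro z hz
    replace hz : z ∈ (w.map (Embedding.induce S).toHom).support := hz
    rw [Walk.support_map] at hz
    obtain ⟨⟨z', hz'⟩, _, rfl⟩ := List.mem_map.mp hz
    exact hz'

lemma path_support_subset {V : Type} {G : SimpleGraph V} (hG : G.IsAcyclic)
    {S : Set V} (hS : SConn G S) {x y : V} (hx : x ∈ S) (hy : y ∈ S)
    (p : G.Walk x y) (hp : p.IsPath) : ∀ z ∈ p.support, z ∈ S := by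
  classical
  obtain ⟨w, hw⟩ := hS.2 x hx y hy
  have he : (⟨p, hp⟩ : G.Path x y) = ⟨w.bypass, w.bypass_isPath⟩ := hG.path_unique _ _
  have hpe : p = w.bypass := congrArg Subtype.val he
  intro z hz
  exact hw z (w.support_bypass_subset (hpe ▸ hz))

lemma edge_dichotomy {V : Type} {G : SimpleGraph V} (hG : G.IsAcyclic) {u v x : V}
    (huv : G.Adj u v) (p : G.Walk u x) (hp : p.IsPath) (q : G.Walk v x) (hq : q.IsPath) :
    v ∈ p.support ∨ u ∈ q.support := by
  by_contra hcon
  push_neg at hcon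
  obtain ⟨h1, h2⟩ := hcon
  have hq' : (Walk.cons huv q).IsPath := (Walk.cons_isPath_iff _ _).mpr ⟨hq, h2⟩
  have he : (⟨p, hp⟩ : G.Path u x) = ⟨Walk.cons huv q, hq'⟩ := hG.path_unique _ _
  have hpe : p = Walk.cons huv q := congrArg Subtype.val he
  apply h1
  rw [hpe, Walk.support_cons]
  exact List.mem_cons_of_mem _ q.start_mem_support

lemma walk_crossing {V : Type} {G : SimpleGraph V} (P : V → Prop) :
    ∀ {a b : V} (w : G.Walk a b), P a → ¬ P b →
    ∃ u v, G.Adj u v ∧ u ∈ w.support ∧ v ∈ w.support ∧ P u ∧ ¬ P v := by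
  classical
  intro a b w
  induction w with
  | nil => intro ha hb; exact absurd ha hb
  | @cons a a' b h w ih =>
    intro ha hb
    by_cases h2 : P a'
    · obtain ⟨u, v, h1, hu, hv, h4, h5⟩ := ih h2 hb
      exact ⟨u, v, h1, by simp [Walk.support_cons, hu],
        by simp [Walk.support_cons, hv], h4, h5⟩
    · exact ⟨a, a', h, (Walk.cons h w).start_mem_support,
        by simp [Walk.support_cons, w.start_mem_support], ha, h2⟩

lemma triple_point {I : Type} {T : SimpleGraph I} (hT : T.IsAcyclic)
    {A B C : Set I} (hA : SConn T A) (hB : SConn T B) (hC : SConn T C)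
    {x y z : I} (hxA : x ∈ A) (hxB : x ∈ B) (hyB : y ∈ B) (hyC : y ∈ C)
    (hzC : z ∈ C) (hzA : z ∈ A) : ∃ p, p ∈ A ∧ p ∈ B ∧ p ∈ C := by
  classical
  obtain ⟨w1, hw1⟩ := hA.2 z hzA x hxA
  obtain ⟨w2, hw2⟩ := hB.2 x hxB y hyB
  set w := (w1.append w2).bypass with hwdef
  have hwpath := (w1.append w2).bypass_isPath
  have hsubAB : ∀ v ∈ w.support, v ∈ A ∪ B := by
    intro v hv
    have hv' := (w1.append w2).support_bypass_subset hv
    rw [Walk.mem_support_append_iff] at hv'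
    rcases hv' with h | h
    · exact Or.inl (hw1 v h)
    · exact Or.inr (hw2 v h)
  have hsubC : ∀ v ∈ w.support, v ∈ C :=
    path_support_subset hT hC hzC hyC w hwpath
  by_cases hex : ∃ p ∈ w.support, p ∈ A ∧ p ∈ B
  · obtain ⟨p, hp, h1, h2⟩ := hex; exact ⟨p, h1, h2, hsubC p hp⟩
  push_neg at hex
  have hyA : y ∉ A := fun h => hex y w.end_mem_support h hyB
  obtain ⟨u, v, huv, hus, hvs, huA, hvA⟩ := walk_crossing (· ∈ A) w hzA hyA
  have hvB : v ∈ B := (hsubAB v hvs).resolve_left hvA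
  obtain ⟨wu, hwu⟩ := hA.2 u huA x hxA
  obtain ⟨wv, hwv⟩ := hB.2 v hvB x hxB
  rcases edge_dichotomy hT huv wu.bypass wu.bypass_isPath wv.bypass wv.bypass_isPath with h | h
  · exact ⟨v, hwu v (wu.support_bypass_subset h), hvB, hsubC v hvs⟩
  · exact ⟨u, huA, hwv u (wv.support_bypass_subset h), hsubC u hus⟩

lemma sconn_inter {I : Type} {T : SimpleGraph I} (hT : T.IsAcyclic)
    {A B : Set I} (hA : SConn T A) (hB : SConn T B) (hne : (A ∩ B).Nonempty) :
    SConn T (A ∩ B) := by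
  classical
  refine ⟨hne, ?_⟩
  intro x hx y hy
  obtain ⟨w, hw⟩ := hA.2 x hx.1 y hy.1
  refine ⟨w.bypass, fun z hz => ⟨hw z (w.support_bypass_subset hz), ?_⟩⟩
  exact path_support_subset hT hB hx.2 hy.2 w.bypass w.bypass_isPath z hz

lemma helly {I : Type} {T : SimpleGraph I} (hT : T.IsAcyclic) :
    ∀ (N : ℕ) (f : Fin (N+1) → Set I), (∀ j, SConn T (f j)) →
    (∀ j k, (f j ∩ f k).Nonempty) → ∃ i, ∀ j, i ∈ f j := by
  intro N
  induction N with
  | zero =>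
    intro f hc _
    obtain ⟨i, hi⟩ := (hc 0).1
    exact ⟨i, fun j => by rw [Fin.eq_zero j]; exact hi⟩
  | succ N ih =>
    intro f hc hp
    set g : Fin (N+1) → Set I := fun j => f j.castSucc ∩ f (Fin.last (N+1)) with hg
    have hg1 : ∀ j, SConn T (g j) := fun j => sconn_inter hT (hc _) (hc _) (hp _ _)
    have hg2 : ∀ j k, (g j ∩ g k).Nonempty := by
      intro j k
      obtain ⟨x, hx⟩ := hp j.castSucc k.castSucc
      obtain ⟨y, hy⟩ := hp k.castSucc (Fin.last _)
      obtain ⟨z, hz⟩ := hp (Fin.last _) j.castSucc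
      obtain ⟨p, h1, h2, h3⟩ := triple_point hT (hc j.castSucc) (hc k.castSucc)
        (hc (Fin.last _)) hx.1 hx.2 hy.1 hy.2 hz.1 hz.2
      exact ⟨p, ⟨h1, h3⟩, ⟨h2, h3⟩⟩
    obtain ⟨i, hi⟩ := ih g hg1 hg2
    refine ⟨i, fun j => ?_⟩
    rcases Fin.eq_castSucc_or_eq_last j with ⟨j', rfl⟩ | rfl
    · exact (hi j').1
    · exact (hi 0).2
lemma bags_walk {V I : Type} {G : SimpleGraph V} {T : SimpleGraph I} {B : I → Finset V}
    (hdec : IsTreeDecomp G T B) (S : Set V) :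
    ∀ {v1 v2 : V} (w : G.Walk v1 v2), (∀ x ∈ w.support, x ∈ S) →
    ∀ i1, v1 ∈ B i1 → ∀ i2, v2 ∈ B i2 →
    ∃ ww : T.Walk i1 i2, ∀ i ∈ ww.support, ∃ v ∈ S, v ∈ B i := by
  intro v1 v2 w
  induction w with
  | @nil v =>
    intro hS i1 h1 i2 h2
    have hsc := sconn_of_induce_connected T _ (hdec.2.2.2 v)
    obtain ⟨ww, hww⟩ := hsc.2 i1 h1 i2 h2
    exact ⟨ww, fun i hi => ⟨v, hS v (by simp [Walk.support_nil]), hww i hi⟩⟩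
  | @cons v1 v' v2 h w ih =>
    intro hS i1 h1 i2 h2
    obtain ⟨i', hi'1, hi'2⟩ := hdec.2.2.1 v1 v' h
    have hsc := sconn_of_induce_connected T _ (hdec.2.2.2 v1)
    obtain ⟨ww1, hww1⟩ := hsc.2 i1 h1 i' hi'1
    have hS' : ∀ x ∈ w.support, x ∈ S := fun x hx => hS x (by simp [Walk.support_cons, hx])
    obtain ⟨ww2, hww2⟩ := ih hS' i' hi'2 i2 h2
    refine ⟨ww1.append ww2, ?_⟩
    intro i hi
    rw [Walk.mem_support_append_iff] at hi
    rcases hi with hi | hi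
    · exact ⟨v1, hS v1 (Walk.cons h w).start_mem_support, hww1 i hi⟩
    · exact hww2 i hi

lemma exists_big_bag {V I : Type} {G : SimpleGraph V} {T : SimpleGraph I} {B : I → Finset V}
    (hdec : IsTreeDecomp G T B) {N : ℕ} (f : Fin (N+1) → Set V)
    (hconn : ∀ j, SConn G (f j))
    (hdisj : ∀ j k, j ≠ k → ∀ v, v ∈ f j → v ∉ f k)
    (htouch : ∀ j k, j ≠ k → ∃ a ∈ f j, ∃ b ∈ f k, G.Adj a b) :
    ∃ i, N + 1 ≤ (B i).card := by
  classical
  set J : Fin (N+1) → Set I := fun j => {i | ∃ v ∈ f j, v ∈ B i} with hJ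
  have hJc : ∀ j, SConn T (J j) := by
    intro j
    constructor
    · obtain ⟨v, hv⟩ := (hconn j).1
      obtain ⟨i, hi⟩ := hdec.2.1 v
      exact ⟨i, v, hv, hi⟩
    · rintro i1 ⟨v1, hv1, hb1⟩ i2 ⟨v2, hv2, hb2⟩
      obtain ⟨w, hw⟩ := (hconn j).2 v1 hv1 v2 hv2
      exact bags_walk hdec (f j) w hw i1 hb1 i2 hb2
  have hJp : ∀ j k, (J j ∩ J k).Nonempty := by
    intro j k
    rcases eq_or_ne j k with rfl | hne
    · obtain ⟨i, hi⟩ := (hJc j).1; exact ⟨i, hi, hi⟩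
    · obtain ⟨a, ha, b, hb, hab⟩ := htouch j k hne
      obtain ⟨i, hi1, hi2⟩ := hdec.2.2.1 a b hab
      exact ⟨i, ⟨a, ha, hi1⟩, ⟨b, hb, hi2⟩⟩
  obtain ⟨i, hi⟩ := helly hdec.1.IsAcyclic N J hJc hJp
  choose vv hv1 hv2 using hi
  refine ⟨i, ?_⟩
  have hinj : Set.InjOn vv (Finset.univ : Finset (Fin (N+1))) := by
    intro j _ k _ hjk
    by_contra hne
    exact hdisj j k hne (vv j) (hv1 j) (hjk ▸ hv1 k)
  have := Finset.card_le_card_of_injOn vv (fun j _ => hv2 j) hinj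
  simpa using this
section Hardware

variable {m c : ℕ}

/-- index of the `t`-th left-half vertex inside a cell. -/
def dL (t : Fin c) : Fin (2*c) := ⟨t.val, by have := t.isLt; omega⟩
/-- index of the `t`-th right-half vertex inside a cell. -/
def dR (t : Fin c) : Fin (2*c) := ⟨c + t.val, by have := t.isLt; omega⟩

/-- the `t`-th left-half column chain in column `j`. -/
def Lset (j : Fin m) (t : Fin c) : Set (Fin m × Fin m × Fin (2*c)) :=
  {p | p.2.1 = j ∧ (p.2.2 : ℕ) = t.val}
/-- the `t`-th right-half row chain in row `j`. -/
def Rset (j : Fin m) (t : Fin c) : Set (Fin m × Fin m × Fin (2*c)) :=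
  {p | p.1 = j ∧ (p.2.2 : ℕ) = c + t.val}

lemma hg_adj_cell (a b : Fin m) (d d' : Fin (2*c)) (h1 : (d:ℕ) < c) (h2 : c ≤ (d':ℕ)) :
    (hardwareGraph m c).Adj (a,b,d) (a,b,d') := by
  unfold hardwareGraph
  rw [fromRel_adj]
  refine ⟨fun h => ?_, Or.inl (Or.inl ⟨rfl, rfl, h1, h2⟩)⟩
  have : ((d:ℕ) : ℕ) = (d':ℕ) := congrArg (fun p : Fin m × Fin m × Fin (2*c) => (p.2.2 : ℕ)) h
  omega

lemma hg_adj_down (a a' b : Fin m) (d : Fin (2*c)) (hd : (d:ℕ) < c)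
    (ha : (a:ℕ) + 1 = (a':ℕ)) : (hardwareGraph m c).Adj (a,b,d) (a',b,d) := by
  unfold hardwareGraph
  rw [fromRel_adj]
  refine ⟨fun h => ?_, Or.inl (Or.inr (Or.inl ⟨rfl, rfl, hd, ha⟩))⟩
  have : (a:ℕ) = (a':ℕ) := congrArg (fun p : Fin m × Fin m × Fin (2*c) => (p.1 : ℕ)) h
  omega

lemma hg_adj_right (a b b' : Fin m) (d : Fin (2*c)) (hd : c ≤ (d:ℕ))
    (hb : (b:ℕ) + 1 = (b':ℕ)) : (hardwareGraph m c).Adj (a,b,d) (a,b',d) := by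
  unfold hardwareGraph
  rw [fromRel_adj]
  refine ⟨fun h => ?_, Or.inl (Or.inr (Or.inr ⟨rfl, rfl, hd, hb⟩))⟩
  have : (b:ℕ) = (b':ℕ) := congrArg (fun p : Fin m × Fin m × Fin (2*c) => (p.2.1 : ℕ)) h
  omega

lemma chain_walk {V : Type} {G : SimpleGraph V} (g : ℕ → V) (n : ℕ) :
    ∀ (k : ℕ), (∀ i, n ≤ i → i < n + k → G.Adj (g i) (g (i+1))) →
    ∃ w : G.Walk (g n) (g (n+k)), ∀ x ∈ w.support, ∃ i, n ≤ i ∧ i ≤ n + k ∧ x = g i := by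
  intro k
  induction k with
  | zero =>
    intro _
    exact ⟨Walk.nil, fun x hx => ⟨n, le_refl n, by omega, by simpa using hx⟩⟩
  | succ k ih =>
    intro h
    obtain ⟨w, hw⟩ := ih (fun i h1 h2 => h i h1 (by omega))
    refine ⟨w.append (Walk.cons (h (n+k) (by omega) (by omega)) Walk.nil), ?_⟩
    intro x hx
    rw [Walk.mem_support_append_iff] at hx
    rcases hx with hx | hx
    · obtain ⟨i, h1, h2, h3⟩ := hw x hx; exact ⟨i, h1, by omega, h3⟩
    · simp only [Walk.support_cons, Walk.support_nil, List.mem_cons] at hx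
      rcases hx with rfl | hx
      · exact ⟨n+k, by omega, by omega, rfl⟩
      · exact ⟨n+k+1, by omega, by omega, by simpa using hx⟩

lemma col_walk (b : Fin m) (d : Fin (2*c)) (hd : (d:ℕ) < c) (a a' : Fin m) :
    ∃ w : (hardwareGraph m c).Walk (a,b,d) (a',b,d),
      ∀ x ∈ w.support, x.2.1 = b ∧ x.2.2 = d := by
  have key : ∀ a a' : Fin m, (a:ℕ) ≤ (a':ℕ) →
      ∃ w : (hardwareGraph m c).Walk (a,b,d) (a',b,d),
        ∀ x ∈ w.support, x.2.1 = b ∧ x.2.2 = d := by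
    intro a a' hle
    have hm0 : 0 < m := a.pos
    set g : ℕ → Fin m × Fin m × Fin (2*c) := fun i => (⟨min i (m-1), by omega⟩, b, d) with hg
    have hadj : ∀ i, (a:ℕ) ≤ i → i < (a:ℕ) + ((a':ℕ) - (a:ℕ)) → 
        (hardwareGraph m c).Adj (g i) (g (i+1)) := by
      intro i h1 h2
      have h3 : i + 1 ≤ m - 1 := by have := a'.isLt; omega
      apply hg_adj_down _ _ _ _ hd
      show min i (m-1) + 1 = min (i+1) (m-1)
      omega
    obtain ⟨w, hw⟩ := chain_walk g (a:ℕ) ((a':ℕ) - (a:ℕ)) hadj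
    have ea : g (a:ℕ) = (a, b, d) :=
      congrArg (fun x => (x, b, d)) (Fin.ext (by have := a.isLt; simp; omega))
    have eb : g ((a:ℕ) + ((a':ℕ) - (a:ℕ))) = (a', b, d) :=
      congrArg (fun x => (x, b, d)) (Fin.ext (by have := a'.isLt; simp; omega))
    refine ⟨w.copy ea eb, ?_⟩
    intro x hx
    rw [Walk.support_copy] at hx
    obtain ⟨i, _, _, rfl⟩ := hw x hx
    exact ⟨rfl, rfl⟩
  rcases le_total (a:ℕ) (a':ℕ) with h | h
  · exact key a a' h
  · obtain ⟨w, hw⟩ := key a' a h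
    refine ⟨w.reverse, ?_⟩
    intro x hx
    rw [Walk.support_reverse, List.mem_reverse] at hx
    exact hw x hx

lemma row_walk (a : Fin m) (d : Fin (2*c)) (hd : c ≤ (d:ℕ)) (b b' : Fin m) :
    ∃ w : (hardwareGraph m c).Walk (a,b,d) (a,b',d),
      ∀ x ∈ w.support, x.1 = a ∧ x.2.2 = d := by
  have key : ∀ b b' : Fin m, (b:ℕ) ≤ (b':ℕ) →
      ∃ w : (hardwareGraph m c).Walk (a,b,d) (a,b',d),
        ∀ x ∈ w.support, x.1 = a ∧ x.2.2 = d := by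
    intro b b' hle
    have hm0 : 0 < m := b.pos
    set g : ℕ → Fin m × Fin m × Fin (2*c) := fun i => (a, ⟨min i (m-1), by omega⟩, d) with hg
    have hadj : ∀ i, (b:ℕ) ≤ i → i < (b:ℕ) + ((b':ℕ) - (b:ℕ)) →
        (hardwareGraph m c).Adj (g i) (g (i+1)) := by
      intro i h1 h2
      have h3 : i + 1 ≤ m - 1 := by have := b'.isLt; omega
      apply hg_adj_right _ _ _ _ hd
      show min i (m-1) + 1 = min (i+1) (m-1)
      omega
    obtain ⟨w, hw⟩ := chain_walk g (b:ℕ) ((b':ℕ) - (b:ℕ)) hadj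
    have ea : g (b:ℕ) = (a, b, d) :=
      congrArg (fun x => (a, x, d)) (Fin.ext (by have := b.isLt; simp; omega))
    have eb : g ((b:ℕ) + ((b':ℕ) - (b:ℕ))) = (a, b', d) :=
      congrArg (fun x => (a, x, d)) (Fin.ext (by have := b'.isLt; simp; omega))
    refine ⟨w.copy ea eb, ?_⟩
    intro x hx
    rw [Walk.support_copy] at hx
    obtain ⟨i, _, _, rfl⟩ := hw x hx
    exact ⟨rfl, rfl⟩
  rcases le_total (b:ℕ) (b':ℕ) with h | h
  · exact key b b' h
  · obtain ⟨w, hw⟩ := key b' b h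
    refine ⟨w.reverse, ?_⟩
    intro x hx
    rw [Walk.support_reverse, List.mem_reverse] at hx
    exact hw x hx

lemma mem_L_eq {j : Fin m} {t : Fin c} {p : Fin m × Fin m × Fin (2*c)}
    (hp : p ∈ Lset j t) : p = (p.1, j, dL t) := by
  obtain ⟨p1, p2, p3⟩ := p
  obtain ⟨h1, h2⟩ := hp
  simp only at h1 h2
  subst h1
  have : p3 = dL t := Fin.ext h2
  rw [this]

lemma mem_R_eq {j : Fin m} {t : Fin c} {p : Fin m × Fin m × Fin (2*c)}
    (hp : p ∈ Rset j t) : p = (j, p.2.1, dR t) := by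
  obtain ⟨p1, p2, p3⟩ := p
  obtain ⟨h1, h2⟩ := hp
  simp only at h1 h2
  subst h1
  have : p3 = dR t := Fin.ext h2
  rw [this]

lemma sconn_Lset (j : Fin m) (t : Fin c) : SConn (hardwareGraph m c) (Lset j t) := by
  constructor
  · exact ⟨(j, j, dL t), rfl, rfl⟩
  · intro x hx y hy
    obtain ⟨w, hw⟩ := col_walk j (dL t) t.isLt x.1 y.1
    refine ⟨w.copy (mem_L_eq hx).symm (mem_L_eq hy).symm, ?_⟩
    intro z hz
    rw [Walk.support_copy] at hz
    obtain ⟨h1, h2⟩ := hw z hz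
    exact ⟨h1, by rw [h2]; rfl⟩

lemma sconn_Rset (j : Fin m) (t : Fin c) : SConn (hardwareGraph m c) (Rset j t) := by
  constructor
  · exact ⟨(j, j, dR t), rfl, rfl⟩
  · intro x hx y hy
    obtain ⟨w, hw⟩ := row_walk j (dR t) (by simp [dR]) x.2.1 y.2.1
    refine ⟨w.copy (mem_R_eq hx).symm (mem_R_eq hy).symm, ?_⟩
    intro z hz
    rw [Walk.support_copy] at hz
    obtain ⟨h1, h2⟩ := hw z hz
    exact ⟨h1, by rw [h2]; rfl⟩

lemma sconn_LRset (j : Fin m) (t : Fin c) :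
    SConn (hardwareGraph m c) (Lset j t ∪ Rset j t) := by
  have corner_adj : (hardwareGraph m c).Adj (j,j,dL t) (j,j,dR t) :=
    hg_adj_cell j j _ _ t.isLt (by simp [dR])
  have wL : ∀ x, x ∈ Lset j t → ∃ w : (hardwareGraph m c).Walk x (j,j,dL t),
      ∀ z ∈ w.support, z ∈ Lset j t := by
    intro x hx
    obtain ⟨w, hw⟩ := col_walk j (dL t) t.isLt x.1 j
    refine ⟨w.copy (mem_L_eq hx).symm rfl, ?_⟩
    intro z hz
    rw [Walk.support_copy] at hz
    obtain ⟨h1, h2⟩ := hw z hz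
    exact ⟨h1, by rw [h2]; rfl⟩
  have wR : ∀ y, y ∈ Rset j t → ∃ w : (hardwareGraph m c).Walk (j,j,dR t) y,
      ∀ z ∈ w.support, z ∈ Rset j t := by
    intro y hy
    obtain ⟨w, hw⟩ := row_walk j (dR t) (by simp [dR]) j y.2.1
    refine ⟨w.copy rfl (mem_R_eq hy).symm, ?_⟩
    intro z hz
    rw [Walk.support_copy] at hz
    obtain ⟨h1, h2⟩ := hw z hz
    exact ⟨h1, by rw [h2]; rfl⟩
  have cross : ∀ x, x ∈ Lset j t → ∀ y, y ∈ Rset j t →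
      ∃ w : (hardwareGraph m c).Walk x y, ∀ z ∈ w.support, z ∈ Lset j t ∪ Rset j t := by
    intro x hx y hy
    obtain ⟨w1, h1⟩ := wL x hx
    obtain ⟨w2, h2⟩ := wR y hy
    refine ⟨w1.append (Walk.cons corner_adj w2), ?_⟩
    intro z hz
    rw [Walk.mem_support_append_iff] at hz
    rcases hz with hz | hz
    · exact Or.inl (h1 z hz)
    · rw [Walk.support_cons, List.mem_cons] at hz
      rcases hz with rfl | hz
      · exact Or.inl ⟨rfl, rfl⟩
      · exact Or.inr (h2 z hz)
  constructor
  · exact ⟨(j, j, dL t), Or.inl ⟨rfl, rfl⟩⟩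
  · intro x hx y hy
    rcases hx with hx | hx <;> rcases hy with hy | hy
    · obtain ⟨w, hw⟩ := (sconn_Lset j t).2 x hx y hy
      exact ⟨w, fun z hz => Or.inl (hw z hz)⟩
    · exact cross x hx y hy
    · obtain ⟨w, hw⟩ := cross y hy x hx
      refine ⟨w.reverse, ?_⟩
      intro z hz
      rw [Walk.support_reverse, List.mem_reverse] at hz
      exact hw z hz
    · obtain ⟨w, hw⟩ := (sconn_Rset j t).2 x hx y hy
      exact ⟨w, fun z hz => Or.inr (hw z hz)⟩

lemma L_L_disj {j j' : Fin m} {t t' : Fin c} {v : Fin m × Fin m × Fin (2*c)}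
    (h1 : v ∈ Lset j t) (h2 : v ∈ Lset j' t') : j = j' ∧ t = t' :=
  ⟨h1.1.symm.trans h2.1, Fin.ext (h1.2.symm.trans h2.2)⟩

lemma R_R_disj {j j' : Fin m} {t t' : Fin c} {v : Fin m × Fin m × Fin (2*c)}
    (h1 : v ∈ Rset j t) (h2 : v ∈ Rset j' t') : j = j' ∧ t = t' :=
  ⟨h1.1.symm.trans h2.1, Fin.ext (by have := h1.2.symm.trans h2.2; omega)⟩

lemma L_R_disj {j j' : Fin m} {t t' : Fin c} {v : Fin m × Fin m × Fin (2*c)}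
    (h1 : v ∈ Lset j t) (h2 : v ∈ Rset j' t') : False := by
  have := h1.2
  have := h2.2
  have := t.isLt
  omega

lemma touch_R_L (j j' : Fin m) (t t' : Fin c) :
    ∃ a ∈ Rset j t, ∃ b ∈ Lset (m := m) j' t', (hardwareGraph m c).Adj a b := by
  refine ⟨(j, j', dR t), ⟨rfl, rfl⟩, (j, j', dL t'), ⟨rfl, rfl⟩, ?_⟩
  exact (hg_adj_cell j j' (dL t') (dR t) t'.isLt (by simp [dR])).symm

end Hardware
/-- For every `m ≥ 1` and `c ≥ 1`, the treewidth of the hardware graph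
`F(m, c)` is at least `c * m`. -/
theorem le_treewidth_hardwareGraph (m c : ℕ) (hm : 1 ≤ m) (hc : 1 ≤ c) :
    c * m ≤ treewidth (hardwareGraph m c) := by
  classical
  have hN1 : 1 ≤ c * m := Nat.one_le_iff_ne_zero.mpr (by positivity)
  have hne : {k : ℕ | ∃ (I : Type) (T : SimpleGraph I)
      (B : I → Finset (Fin m × Fin m × Fin (2*c))),
      IsTreeDecomp (hardwareGraph m c) T B ∧ ∀ i : I, (B i).card ≤ k + 1}.Nonempty := by
    refine ⟨Fintype.card (Fin m × Fin m × Fin (2*c)), PUnit, ⊥, fun _ => Finset.univ,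
      ⟨⟨?_, ?_⟩, ?_, ?_, ?_⟩, ?_⟩
    · haveI : Nonempty PUnit.{1} := ⟨PUnit.unit⟩
      exact ⟨fun a b => by rw [Subsingleton.elim a b]⟩
    · intro v w hw
      cases w with
      | nil => exact hw.ne_nil rfl
      | cons h _ => simp at h
    · intro v; exact ⟨PUnit.unit, Finset.mem_univ v⟩
    · intro u v _; exact ⟨PUnit.unit, Finset.mem_univ u, Finset.mem_univ v⟩
    · intro v
      haveI : Nonempty {i : PUnit | v ∈ (Finset.univ : Finset (Fin m × Fin m × Fin (2*c)))} :=
        ⟨⟨PUnit.unit, Finset.mem_univ v⟩⟩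
      exact ⟨fun a b => by rw [Subsingleton.elim a b]⟩
    · intro _
      rw [Finset.card_univ]
      omega
  rw [treewidth]
  refine le_csInf hne ?_
  rintro k ⟨I, T, Bags, hdec, hcard⟩
  set j0 : Fin m := ⟨0, hm⟩ with hj0
  set t0 : Fin c := ⟨0, hc⟩ with ht0
  set jj : Fin (c*m+1) → Fin m := fun i => ⟨min ((i:ℕ)/c) (m-1), by omega⟩ with hjj
  set tt : Fin (c*m+1) → Fin c := fun i => ⟨(i:ℕ) % c, Nat.mod_lt _ hc⟩ with htt
  set f : Fin (c*m+1) → Set (Fin m × Fin m × Fin (2*c)) := fun i =>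
    if (i:ℕ) = 0 then Lset j0 t0
    else if (i:ℕ) = c*m then Rset j0 t0
    else Lset (jj i) (tt i) ∪ Rset (jj i) (tt i) with hf
  have hjjval : ∀ i : Fin (c*m+1), (i:ℕ) < c*m → ((jj i):ℕ) = (i:ℕ)/c := by
    intro i hi
    have : (i:ℕ)/c < m := Nat.div_lt_of_lt_mul (by omega)
    show min ((i:ℕ)/c) (m-1) = (i:ℕ)/c
    omega
  have httval : ∀ i : Fin (c*m+1), ((tt i):ℕ) = (i:ℕ) % c := fun i => rfl
  have hj0v : (j0:ℕ) = 0 := rfl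
  have ht0v : (t0:ℕ) = 0 := rfl
  have hmid0 : ∀ i : Fin (c*m+1), (i:ℕ) < c*m → jj i = j0 → tt i = t0 → (i:ℕ) = 0 := by
    intro i hi h1 h2
    have e1 := congrArg Fin.val h1
    rw [hjjval i hi] at e1
    have e2 := congrArg Fin.val h2
    rw [httval i] at e2
    have e1' : (i:ℕ)/c = 0 := by omega
    have e2' : (i:ℕ) % c = 0 := by omega
    have h := Nat.div_add_mod (i:ℕ) c
    rw [e1', e2'] at h
    omega
  have hmidinj : ∀ i k : Fin (c*m+1), (i:ℕ) < c*m → (k:ℕ) < c*m →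
      jj i = jj k → tt i = tt k → i = k := by
    intro i k hi hk h1 h2
    have e1 : (i:ℕ)/c = (k:ℕ)/c := by
      have := congrArg Fin.val h1
      rwa [hjjval i hi, hjjval k hk] at this
    have e2 : (i:ℕ) % c = (k:ℕ) % c := by
      have := congrArg Fin.val h2
      rwa [httval i, httval k] at this
    have d1 := Nat.div_add_mod (i:ℕ) c
    have d2 := Nat.div_add_mod (k:ℕ) c
    have e3 : c * ((i:ℕ)/c) = c * ((k:ℕ)/c) := by rw [e1]
    exact Fin.ext (by omega)
  have hconn : ∀ i, SConn (hardwareGraph m c) (f i) := by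
    intro i
    simp only [hf]
    split_ifs
    · exact sconn_Lset j0 t0
    · exact sconn_Rset j0 t0
    · exact sconn_LRset (jj i) (tt i)
  have hdisj : ∀ i k, i ≠ k → ∀ v, v ∈ f i → v ∉ f k := by
    intro i k hik v hvi hvk
    have hvalne : (i:ℕ) ≠ (k:ℕ) := fun h => hik (Fin.ext h)
    simp only [hf] at hvi hvk
    split_ifs at hvi hvk with h1 h2 h3 h4 h5 h6 h7 h8
    all_goals first
      | omega
      | exact L_R_disj hvi hvk
      | exact L_R_disj hvk hvi
      | skip
    -- remaining mixed cases
    · -- i = 0 : L j0 t0 ; k mid : union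
      have hklt : (k:ℕ) < c*m := by omega
      rcases hvk with hvk | hvk
      · obtain ⟨e1, e2⟩ := L_L_disj hvi hvk
        exact (by omega : ¬ (k:ℕ) = 0) (hmid0 k hklt e1.symm e2.symm)
      · exact L_R_disj hvi hvk
    · -- i = N : R j0 t0 ; k = mid
      have hklt : (k:ℕ) < c*m := by omega
      rcases hvk with hvk | hvk
      · exact L_R_disj hvk hvi
      · obtain ⟨e1, e2⟩ := R_R_disj hvi hvk
        exact (by omega : ¬ (k:ℕ) = 0) (hmid0 k hklt e1.symm e2.symm)
    · -- i mid ; k = 0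
      have hilt : (i:ℕ) < c*m := by omega
      rcases hvi with hvi | hvi
      · obtain ⟨e1, e2⟩ := L_L_disj hvi hvk
        exact (by omega : ¬ (i:ℕ) = 0) (hmid0 i hilt e1 e2)
      · exact L_R_disj hvk hvi
    · -- i mid ; k = N
      have hilt : (i:ℕ) < c*m := by omega
      rcases hvi with hvi | hvi
      · exact L_R_disj hvi hvk
      · obtain ⟨e1, e2⟩ := R_R_disj hvi hvk
        exact (by omega : ¬ (i:ℕ) = 0) (hmid0 i hilt e1 e2)
    · -- both mid
      have hilt : (i:ℕ) < c*m := by omega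
      have hklt : (k:ℕ) < c*m := by omega
      rcases hvi with hvi | hvi <;> rcases hvk with hvk | hvk
      · obtain ⟨e1, e2⟩ := L_L_disj hvi hvk
        exact hik (hmidinj i k hilt hklt e1 e2)
      · exact L_R_disj hvi hvk
      · exact L_R_disj hvk hvi
      · obtain ⟨e1, e2⟩ := R_R_disj hvi hvk
        exact hik (hmidinj i k hilt hklt e1 e2)
  have hasL : ∀ i : Fin (c*m+1), (i:ℕ) ≠ c*m → ∃ j t, Lset j t ⊆ f i := by
    intro i hi
    rcases eq_or_ne ((i:ℕ)) 0 with h1 | h1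
    · refine ⟨j0, t0, ?_⟩
      simp only [hf]
      rw [if_pos h1]
    · refine ⟨jj i, tt i, ?_⟩
      simp only [hf]
      rw [if_neg h1, if_neg hi]
      exact Set.subset_union_left
  have hasR : ∀ i : Fin (c*m+1), (i:ℕ) ≠ 0 → ∃ j t, Rset j t ⊆ f i := by
    intro i hi
    rcases eq_or_ne ((i:ℕ)) (c*m) with h1 | h1
    · refine ⟨j0, t0, ?_⟩
      simp only [hf]
      rw [if_neg hi, if_pos h1]
    · refine ⟨jj i, tt i, ?_⟩
      simp only [hf]
      rw [if_neg hi, if_neg h1]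
      exact Set.subset_union_right
  have htouch : ∀ i k, i ≠ k → ∃ a ∈ f i, ∃ b ∈ f k, (hardwareGraph m c).Adj a b := by
    intro i k hik
    have hvalne : (i:ℕ) ≠ (k:ℕ) := fun h => hik (Fin.ext h)
    by_cases h : (i:ℕ) = 0 ∨ (k:ℕ) = c*m
    · have hk0 : (k:ℕ) ≠ 0 := by
        rcases h with h | h
        · omega
        · omega
      have hiN : (i:ℕ) ≠ c*m := by
        rcases h with h | h
        · omega
        · omega
      obtain ⟨jR, tR, hsubR⟩ := hasR k hk0
      obtain ⟨jL, tL, hsubL⟩ := hasL i hiN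
      obtain ⟨a, ha, b, hb, hab⟩ := touch_R_L jR jL tR tL
      exact ⟨b, hsubL hb, a, hsubR ha, hab.symm⟩
    · push_neg at h
      obtain ⟨hi0, hkN⟩ := h
      obtain ⟨jR, tR, hsubR⟩ := hasR i hi0
      obtain ⟨jL, tL, hsubL⟩ := hasL k hkN
      obtain ⟨a, ha, b, hb, hab⟩ := touch_R_L jR jL tR tL
      exact ⟨a, hsubR ha, b, hsubL hb, hab⟩
  obtain ⟨ibag, hbig⟩ := exists_big_bag hdec f hconn hdisj htouch
  have := hcard ibag
  omega
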